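/- Let W = C₄ ≀ Sym(3), H = ⟨γ₁γ₂γ₃⟩ ≅ C₄, and G = ⟨x, y, Sym(3)⟩ where x = γ₁⁻¹γ₂²γ₃⁻¹ and y = γ₁⁻¹γ₂⁻¹γ₃². Then G ∩ H = {1}, G ≅ G(4,4,3), and W is the internal direct product of G and H. -/

import Mathlib

set_option maxHeartbeats 1000000


open Multiplicative

/-- Cyclic group of order m, multiplicatively. -/
abbrev Cyc (m : ℕ) := Multiplicative (ZMod m)

/-- Minimal faithful permutation degree. -/
noncomputable def mu (G : Type*) [Group G] : ℕ :=
  sInf {n | ∃ f : G →* Equiv.Perm (Fin n), Function.Injective f}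

/-- Sym(n) acting on the base group (C_m)^n by permuting coordinates. -/
def wreathAut (m n : ℕ) : Equiv.Perm (Fin n) →* MulAut (Fin n → Cyc m) where
  toFun σ :=
    { toFun := fun θ => θ ∘ σ.symm
      invFun := fun θ => θ ∘ σ
      left_inv := fun θ => by ext i; simp
      right_inv := fun θ => by ext i; simp
      map_mul' := fun θ₁ θ₂ => rfl }
  map_one' := by ext θ i; rfl
  map_mul' := fun σ τ => by ext θ i; rfl

/-- The wreath product C_m ≀ Sym(n). -/
abbrev Wr (m n : ℕ) := SemidirectProduct (Fin n → Cyc m) (Equiv.Perm (Fin n)) (wreathAut m n)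

/-- A(m,p,n) = {θ ∈ (C_m)^n | (θ₁⋯θₙ)^{m/p} = 1}. -/
def Apn (m p n : ℕ) : Subgroup (Fin n → Cyc m) where
  carrier := {θ | (∏ i, θ i) ^ (m / p) = 1}
  one_mem' := by simp
  mul_mem' := by
    intro α β hα hβ
    simp only [Set.mem_setOf_eq, Pi.mul_apply] at *
    rw [Finset.prod_mul_distrib, mul_pow, hα, hβ, one_mul]
  inv_mem' := by
    intro α hα
    simp only [Set.mem_setOf_eq, Pi.inv_apply] at *
    rw [Finset.prod_inv_distrib, inv_pow, hα, inv_one]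

lemma apn_act_mem {m p n : ℕ} (σ : Equiv.Perm (Fin n)) {θ : Fin n → Cyc m}
    (hθ : θ ∈ Apn m p n) : wreathAut m n σ θ ∈ Apn m p n := by
  have : ∏ i, θ (σ.symm i) = ∏ i, θ i := Equiv.prod_comp σ.symm θ
  simpa [Apn, wreathAut, Subgroup.mem_mk, Set.mem_setOf_eq, Function.comp, this] using hθ

/-- G(m,p,n) = A(m,p,n) ⋊ Sym(n), realized inside C_m ≀ Sym(n). -/
def Gmpn (m p n : ℕ) : Subgroup (Wr m n) where
  carrier := {g | g.left ∈ Apn m p n}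
  one_mem' := by
    show (1 : Wr m n).left ∈ Apn m p n
    rw [SemidirectProduct.one_left]
    exact one_mem _
  mul_mem' := by
    intro g h hg hh
    show (g * h).left ∈ Apn m p n
    rw [SemidirectProduct.mul_left]
    exact mul_mem hg (apn_act_mem g.right hh)
  inv_mem' := by
    intro g hg
    show g⁻¹.left ∈ Apn m p n
    rw [SemidirectProduct.inv_left]
    exact apn_act_mem _ (inv_mem hg)

/-- x = γ₁⁻¹ γ₂² γ₃⁻¹ in the base group of C₄ ≀ Sym(3). -/
def xEl : Wr 4 3 := SemidirectProduct.inl (fun i => ofAdd ((![3, 2, 3] : Fin 3 → ZMod 4) i))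

/-- y = γ₁⁻¹ γ₂⁻¹ γ₃² in the base group of C₄ ≀ Sym(3). -/
def yEl : Wr 4 3 := SemidirectProduct.inl (fun i => ofAdd ((![3, 3, 2] : Fin 3 → ZMod 4) i))

/-- G = ⟨x, y, Sym(3)⟩ ≤ W. -/
def Gsub : Subgroup (Wr 4 3) :=
  Subgroup.closure ({xEl, yEl} ∪ Set.range (SemidirectProduct.inr))

/-- H = ⟨γ₁γ₂γ₃⟩ ≤ W. -/
def Hsub : Subgroup (Wr 4 3) :=
  Subgroup.closure {(SemidirectProduct.inl (fun _ => ofAdd 1) : Wr 4 3)}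

open SemidirectProduct

/-- product-of-coordinates homomorphism on the wreath product. -/
def phi : Wr 4 3 →* Cyc 4 where
  toFun g := ∏ i, g.left i
  map_one' := by simp
  map_mul' g h := by
    show (∏ i, (g.left * wreathAut 4 3 g.right h.left) i) = _
    simp only [Pi.mul_apply]
    rw [Finset.prod_mul_distrib]
    congr 1
    exact Equiv.prod_comp g.right.symm h.left

lemma gmpn_eq_ker : Gmpn 4 4 3 = phi.ker := by
  ext g
  show g.left ∈ Apn 4 4 3 ↔ _
  show (∏ i, g.left i) ^ (4 / 4) = 1 ↔ _
  rw [MonoidHom.mem_ker]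
  norm_num
  rfl

/-- diagonal embedding C₄ → W. -/
def psi : Cyc 4 →* Wr 4 3 :=
  inl.comp { toFun := fun a _ => a, map_one' := rfl, map_mul' := fun _ _ => rfl }

lemma psi_inj : Function.Injective psi := by
  intro a b h
  have := congrArg (fun g : Wr 4 3 => g.left (0 : Fin 3)) h
  simpa [psi] using this

lemma psi_eq_pow (a : Cyc 4) :
    psi a = (inl (fun _ => ofAdd 1) : Wr 4 3) ^ (toAdd a).val := by
  have key : (fun _ => a : Fin 3 → Cyc 4) = (fun _ => ofAdd 1) ^ (toAdd a).val := by
    funext i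
    show a = (ofAdd (1 : ZMod 4)) ^ (toAdd a).val
    rw [← ofAdd_nsmul, nsmul_eq_mul, mul_one, ZMod.natCast_val, ZMod.cast_id, ofAdd_toAdd]
  show (inl (fun _ => a) : Wr 4 3) = _
  rw [key, map_pow]

lemma gen_mem_hsub : (inl (fun _ => ofAdd 1) : Wr 4 3) ∈ Hsub :=
  Subgroup.subset_closure (Set.mem_singleton _)

lemma hsub_eq_range : Hsub = psi.range := by
  apply le_antisymm
  · rw [Hsub, Subgroup.closure_le]
    rintro g rfl
    exact ⟨ofAdd 1, rfl⟩
  · rintro g ⟨a, rfl⟩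
    rw [psi_eq_pow]
    exact pow_mem gen_mem_hsub _

def uVec : Fin 3 → Cyc 4 := fun i => ofAdd ((![0, 3, 1] : Fin 3 → ZMod 4) i)
def vVec : Fin 3 → Cyc 4 := fun i => ofAdd ((![3, 1, 0] : Fin 3 → ZMod 4) i)

lemma x_mem_gsub : xEl ∈ Gsub :=
  Subgroup.subset_closure (Set.mem_union_left _ (Set.mem_insert _ _))

lemma y_mem_gsub : yEl ∈ Gsub :=
  Subgroup.subset_closure (Set.mem_union_left _ (Set.mem_insert_of_mem _ (Set.mem_singleton _)))

lemma inr_mem_gsub (σ : Equiv.Perm (Fin 3)) : (inr σ : Wr 4 3) ∈ Gsub :=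
  Subgroup.subset_closure (Set.mem_union_right _ ⟨σ, rfl⟩)

lemma u_mem_gsub : (inl uVec : Wr 4 3) ∈ Gsub := by
  have h : (inl uVec : Wr 4 3) = xEl * yEl⁻¹ := by
    rw [xEl, yEl, ← map_inv, ← map_mul]
    congr 1
    funext i
    fin_cases i <;> decide
  rw [h]
  exact mul_mem x_mem_gsub (inv_mem y_mem_gsub)

lemma v_mem_gsub : (inl vVec : Wr 4 3) ∈ Gsub := by
  have h1 : (inl (wreathAut 4 3 (Equiv.swap 0 1) uVec) : Wr 4 3) ∈ Gsub := by
    rw [inl_aut]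
    exact mul_mem (mul_mem (inr_mem_gsub _) u_mem_gsub) (inr_mem_gsub _)
  have h2 : (inl vVec : Wr 4 3)
      = inl (wreathAut 4 3 (Equiv.swap 0 1) uVec) * (inl uVec)⁻¹ := by
    rw [← map_inv, ← map_mul]
    congr 1
    funext i
    fin_cases i <;> decide
  rw [h2]
  exact mul_mem h1 (inv_mem u_mem_gsub)

lemma zmodfact : ∀ a0 a1 a2 : ZMod 4, a0 + a1 + a2 = 0 →
    a0 = a2.val • (0 : ZMod 4) + (a0 * 3).val • (3 : ZMod 4)
    ∧ a1 = a2.val • (3 : ZMod 4) + (a0 * 3).val • (1 : ZMod 4)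
    ∧ a2 = a2.val • (1 : ZMod 4) + (a0 * 3).val • (0 : ZMod 4) := by decide

lemma apn_decomp (θ : Fin 3 → Cyc 4) (hθ : θ ∈ Apn 4 4 3) :
    θ = uVec ^ (toAdd (θ 2)).val * vVec ^ ((toAdd (θ 0)) * 3).val := by
  have h1 : (∏ i, θ i) ^ (4 / 4) = 1 := hθ
  rw [Fin.prod_univ_three] at h1
  norm_num at h1
  have hsum : toAdd (θ 0) + toAdd (θ 1) + toAdd (θ 2) = 0 := by
    have := congrArg toAdd h1
    simpa using this
  obtain ⟨e0, e1, e2⟩ := zmodfact _ _ _ hsum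
  funext i
  fin_cases i
  · show θ 0 = uVec 0 ^ _ * vVec 0 ^ _
    rw [uVec, vVec]
    show θ 0 = ofAdd ((![0,3,1] : Fin 3 → ZMod 4) 0) ^ _ * ofAdd ((![3,1,0] : Fin 3 → ZMod 4) 0) ^ _
    simp only [Matrix.cons_val_zero]
    rw [← ofAdd_nsmul, ← ofAdd_nsmul, ← ofAdd_add, ← e0, ofAdd_toAdd]
  · show θ 1 = uVec 1 ^ _ * vVec 1 ^ _
    rw [uVec, vVec]
    show θ 1 = ofAdd ((![0,3,1] : Fin 3 → ZMod 4) 1) ^ _ * ofAdd ((![3,1,0] : Fin 3 → ZMod 4) 1) ^ _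
    simp only [Matrix.cons_val_one, Matrix.head_cons, Matrix.cons_val_zero]
    rw [← ofAdd_nsmul, ← ofAdd_nsmul, ← ofAdd_add, ← e1, ofAdd_toAdd]
  · show θ 2 = uVec 2 ^ _ * vVec 2 ^ _
    rw [uVec, vVec]
    show θ 2 = ofAdd ((![0,3,1] : Fin 3 → ZMod 4) 2) ^ _ * ofAdd ((![3,1,0] : Fin 3 → ZMod 4) 2) ^ _
    simp only [Matrix.cons_val_two, Matrix.tail_cons, Matrix.head_cons]
    rw [← ofAdd_nsmul, ← ofAdd_nsmul, ← ofAdd_add, ← e2, ofAdd_toAdd]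

lemma inl_apn_mem {θ : Fin 3 → Cyc 4} (hθ : θ ∈ Apn 4 4 3) : (inl θ : Wr 4 3) ∈ Gsub := by
  rw [apn_decomp θ hθ, map_mul, map_pow, map_pow]
  exact mul_mem (pow_mem u_mem_gsub _) (pow_mem v_mem_gsub _)

lemma gsub_eq : Gsub = Gmpn 4 4 3 := by
  apply le_antisymm
  · rw [Gsub, Subgroup.closure_le]
    intro g hg
    simp only [Set.mem_union, Set.mem_insert_iff, Set.mem_singleton_iff, Set.mem_range] at hg
    rcases hg with (rfl | rfl) | ⟨σ, rfl⟩
    · show xEl.left ∈ Apn 4 4 3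
      show (∏ i, xEl.left i) ^ (4 / 4) = 1
      rw [Fin.prod_univ_three]
      decide
    · show yEl.left ∈ Apn 4 4 3
      show (∏ i, yEl.left i) ^ (4 / 4) = 1
      rw [Fin.prod_univ_three]
      decide
    · show (inr σ : Wr 4 3).left ∈ Apn 4 4 3
      rw [left_inr]
      exact one_mem _
  · intro g hg
    have h : g = inl g.left * inr g.right := (inl_left_mul_inr_right g).symm
    rw [h]
    exact mul_mem (inl_apn_mem hg) (inr_mem_gsub g.right)

lemma phi_psi (b : Cyc 4) : phi (psi b) = b ^ 3 := by
  show (∏ _i : Fin 3, b) = b ^ 3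
  simp [Finset.prod_const]

lemma h_center : (inl (fun _ => ofAdd 1) : Wr 4 3) ∈ Subgroup.center (Wr 4 3) := by
  rw [Subgroup.mem_center_iff]
  intro g
  refine SemidirectProduct.ext ?_ ?_
  · show g.left * wreathAut 4 3 g.right (fun _ => ofAdd 1) = (fun _ => ofAdd (1 : ZMod 4)) * g.left
    funext x
    show g.left x * ofAdd 1 = ofAdd 1 * g.left x
    exact mul_comm _ _
  · show g.right * 1 = 1 * g.right
    rw [mul_one, one_mul]

lemma hsub_le_center : Hsub ≤ Subgroup.center (Wr 4 3) :=
  (Subgroup.closure_le _).2 (Set.singleton_subset_iff.2 h_center)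

lemma cyc_pow_fact : ∀ a : Cyc 4, a ^ 3 = 1 → a = 1 := by decide

lemma cyc_fact2 : ∀ a : Cyc 4, a * ((a ^ 3) ^ 3)⁻¹ = 1 := by decide

theorem stmt16 :
    Gsub ⊓ Hsub = ⊥ ∧ Nonempty (Gsub ≃* Gmpn 4 4 3) ∧ Nonempty (Hsub ≃* Cyc 4) ∧
    Gsub.Normal ∧ Hsub.Normal ∧ Gsub ⊔ Hsub = ⊤ := by
  refine ⟨?_, ⟨MulEquiv.subgroupCongr gsub_eq⟩,
    ⟨(MulEquiv.subgroupCongr hsub_eq_range).trans (MonoidHom.ofInjective psi_inj).symm⟩,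
    ?_, ?_, ?_⟩
  · rw [eq_bot_iff]
    intro g hg
    rw [Subgroup.mem_inf] at hg
    obtain ⟨hG, hH⟩ := hg
    rw [hsub_eq_range] at hH
    obtain ⟨a, rfl⟩ := hH
    rw [gsub_eq, gmpn_eq_ker, MonoidHom.mem_ker, phi_psi] at hG
    rw [Subgroup.mem_bot, cyc_pow_fact a hG, map_one]
  · rw [gsub_eq, gmpn_eq_ker]
    exact phi.normal_ker
  · constructor
    intro n hn g
    have hc := Subgroup.mem_center_iff.mp (hsub_le_center hn) g
    rw [hc, mul_inv_cancel_right]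
    exact hn
  · rw [eq_top_iff]
    intro w _
    have hdecomp : w = (w * (psi (phi w ^ 3))⁻¹) * psi (phi w ^ 3) := by group
    rw [hdecomp]
    refine mul_mem (Subgroup.mem_sup_left ?_) (Subgroup.mem_sup_right ?_)
    · rw [gsub_eq, gmpn_eq_ker, MonoidHom.mem_ker, map_mul, map_inv, phi_psi]
      exact cyc_fact2 _
    · rw [hsub_eq_range]
      exact ⟨_, rfl⟩
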